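/- arXiv:1303.1671 — 7 statements merged into one kernel-verified Lean document; each statement's English description precedes it below -/
import Mathlib

section
/- If the graph G² has a vertex cover X of size n + k, where G is a finite simple graph on n vertices, then the set S = {v ∈ V : (v,1) ∈ X and (v,2) ∈ X} is an odd cycle transversal of G of size exactly k. (Backward direction of Lemma 1.) -/
/-- The graph `G²` on vertex set `V × Bool` (copy 1 = `false`, copy 2 = `true`):
edges `{(u,i),(v,i)}` for every edge `{u,v}` of `G`, plus `{(v,1),(v,2)}` for every `v`. -/
def doubledGraph {V : Type*} (G : SimpleGraph V) : SimpleGraph (V × Bool) where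
  Adj x y := (x.2 = y.2 ∧ G.Adj x.1 y.1) ∨ (x.1 = y.1 ∧ x.2 ≠ y.2)
  symm := by
    constructor
    rintro ⟨u, i⟩ ⟨v, j⟩ (⟨h1, h2⟩ | ⟨h1, h2⟩)
    · exact Or.inl ⟨h1.symm, h2.symm⟩
    · exact Or.inr ⟨h1.symm, h2.symm⟩
  loopless := by
    constructor
    rintro ⟨u, i⟩ (⟨_, h⟩ | ⟨_, h⟩)
    · exact G.loopless.irrefl u h
    · exact h rfl

/-- `X` is a vertex cover of `G`: it contains an endpoint of every edge. -/
def IsVertexCover {α : Type*} (G : SimpleGraph α) (X : Set α) : Prop :=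
  ∀ ⦃u v : α⦄, G.Adj u v → u ∈ X ∨ v ∈ X

/-- Backward direction of Lemma 1: if `G²` has a vertex cover `X` of size `n + k`, then
`S = {v | (v,1) ∈ X ∧ (v,2) ∈ X}` is an odd cycle transversal of `G` of size exactly `k`. -/
theorem stmt1 {V : Type*} [Fintype V] (G : SimpleGraph V) (X : Set (V × Bool)) (k : ℕ)
    (hX : IsVertexCover (doubledGraph G) X)
    (hcard : X.ncard = Fintype.card V + k) :
    (G.induce (({v : V | (v, false) ∈ X ∧ (v, true) ∈ X}ᶜ : Set V))).Colorable 2 ∧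
    {v : V | (v, false) ∈ X ∧ (v, true) ∈ X}.ncard = k := by
  classical
  set S : Set V := {v : V | (v, false) ∈ X ∧ (v, true) ∈ X} with hS
  have hcov : ∀ v : V, (v, false) ∈ X ∨ (v, true) ∈ X := fun v =>
    hX (Or.inr ⟨rfl, by simp⟩)
  constructor
  · -- coloring
    have c : (G.induce (Sᶜ : Set V)).Coloring Bool := by
      refine SimpleGraph.Coloring.mk
        (fun v => if ((v : V), false) ∈ X then true else false) ?_
      rintro ⟨u, hu⟩ ⟨v, hv⟩ hadj heq
      simp only [SimpleGraph.comap_adj, Function.Embedding.coe_subtype] at hadj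
      simp only [Set.mem_compl_iff, hS, Set.mem_setOf_eq, not_and] at hu hv
      by_cases huf : (u, false) ∈ X
      · by_cases hvf : (v, false) ∈ X
        · -- both colors true, then (u,true),(v,true) ∉ X, but edge covered
          have h1 : (u, true) ∉ X := fun h => hu huf h
          have h2 : (v, true) ∉ X := fun h => hv hvf h
          rcases hX (show (doubledGraph G).Adj (u, true) (v, true) from
            Or.inl ⟨rfl, hadj⟩) with h | h
          · exact h1 h
          · exact h2 h
        · simp [huf, hvf] at heq
      · by_cases hvf : (v, false) ∈ X
        · simp [huf, hvf] at heq
        · rcases hX (show (doubledGraph G).Adj (u, false) (v, false) from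
            Or.inl ⟨rfl, hadj⟩) with h | h
          · exact huf h
          · exact hvf h
    have := c.colorable
    simpa using this
  · -- cardinality
    have hXc : X.toFinset.card = Fintype.card V + k := by
      rw [← Set.ncard_eq_toFinset_card']; exact hcard
    have key : X.toFinset.card =
        ∑ v : V, ((X.toFinset.filter (fun x => x.1 = v)).card) :=
      Finset.card_eq_sum_card_fiberwise (fun x _ => Finset.mem_univ x.1)
    have hfib : ∀ v : V,
        (X.toFinset.filter (fun x => x.1 = v)).card = if v ∈ S then 2 else 1 := by
      intro v
      by_cases hv : v ∈ S
      · have hset : X.toFinset.filter (fun x => x.1 = v)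
            = {(v, false), (v, true)} := by
          ext ⟨w, b⟩
          simp only [Finset.mem_filter, Set.mem_toFinset, Finset.mem_insert,
            Finset.mem_singleton, Prod.mk.injEq]
          constructor
          · rintro ⟨hmem, rfl⟩
            cases b
            · exact Or.inl ⟨rfl, rfl⟩
            · exact Or.inr ⟨rfl, rfl⟩
          · rintro (⟨rfl, rfl⟩ | ⟨rfl, rfl⟩)
            · exact ⟨hv.1, rfl⟩
            · exact ⟨hv.2, rfl⟩
        rw [hset]
        simp [hv]
      · simp only [hS, Set.mem_setOf_eq, not_and] at hv
        rcases hcov v with h | h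
        · have hnt : (v, true) ∉ X := fun ht => hv h ht
          have hset : X.toFinset.filter (fun x => x.1 = v) = {(v, false)} := by
            ext ⟨w, b⟩
            simp only [Finset.mem_filter, Set.mem_toFinset, Finset.mem_singleton,
              Prod.mk.injEq]
            constructor
            · rintro ⟨hmem, rfl⟩
              cases b
              · exact ⟨rfl, rfl⟩
              · exact absurd hmem hnt
            · rintro ⟨rfl, rfl⟩
              exact ⟨h, rfl⟩
          rw [hset]
          simp [show v ∉ S from fun hvS => hv hvS.1 hvS.2]
        · have hnf : (v, false) ∉ X := fun hf => hv hf h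
          have hset : X.toFinset.filter (fun x => x.1 = v) = {(v, true)} := by
            ext ⟨w, b⟩
            simp only [Finset.mem_filter, Set.mem_toFinset, Finset.mem_singleton,
              Prod.mk.injEq]
            constructor
            · rintro ⟨hmem, rfl⟩
              cases b
              · exact absurd hmem hnf
              · exact ⟨rfl, rfl⟩
            · rintro ⟨rfl, rfl⟩
              exact ⟨h, rfl⟩
          rw [hset]
          simp [show v ∉ S from fun hvS => hv hvS.1 hvS.2]
    have hsum : X.toFinset.card = Fintype.card V + S.toFinset.card := by
      rw [key]
      have : ∀ v : V, (X.toFinset.filter (fun x => x.1 = v)).card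
          = 1 + (if v ∈ S then 1 else 0) := by
        intro v; rw [hfib v]; by_cases h : v ∈ S <;> simp [h]
      rw [Finset.sum_congr rfl (fun v _ => this v), Finset.sum_add_distrib]
      congr 1
      · rw [Finset.sum_const, smul_eq_mul, mul_one, Finset.card_univ]
      · rw [← Finset.card_filter]
        congr 1
        ext v
        simp
    have : Fintype.card V + S.toFinset.card = Fintype.card V + k := by
      rw [← hsum, hXc]
    have hcardS : S.toFinset.card = k := Nat.add_left_cancel this
    rw [Set.ncard_eq_toFinset_card']
    exact hcardS
end

section
/- For a finite simple graph G on n vertices and a non-negative integer k, G has an odd cycle transversal of size at most k if and only if G² has a vertex cover of size at most n + k. -/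
/-- `G` has an odd cycle transversal of size at most `k` iff `G²` has a vertex cover of size
at most `n + k`. -/
theorem stmt2 {V : Type*} [Fintype V] (G : SimpleGraph V) (k : ℕ) :
    (∃ S : Set V, (G.induce (Sᶜ : Set V)).Colorable 2 ∧ S.ncard ≤ k) ↔
    (∃ X : Set (V × Bool), IsVertexCover (doubledGraph G) X ∧
      X.ncard ≤ Fintype.card V + k) := by
  classical
  constructor
  · rintro ⟨S, ⟨C⟩, hk⟩
    set f : V → Bool := fun v => if h : v ∈ (Sᶜ : Set V) then decide (C ⟨v, h⟩ = 1) else false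
      with hf
    have hfne : ∀ (u v : V) (hu : u ∈ (Sᶜ : Set V)) (hv : v ∈ (Sᶜ : Set V)),
        G.Adj u v → f u ≠ f v := by
      intro u v hu hv hadj
      have hC : C ⟨u, hu⟩ ≠ C ⟨v, hv⟩ := C.valid hadj
      have key : ∀ a b : Fin 2, a ≠ b → decide (a = 1) ≠ decide (b = 1) := by decide
      simp only [hf]
      rw [dif_pos hu, dif_pos hv]
      exact key _ _ hC
    refine ⟨((fun v => (v, false)) '' S) ∪ ((fun v => (v, true)) '' S) ∪
      ((fun v => (v, f v)) '' (Sᶜ : Set V)), ?_, ?_⟩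
    · rintro ⟨u, i⟩ ⟨v, j⟩ (⟨hij, hadj⟩ | ⟨huv, hij⟩)
      · dsimp only at hij hadj
        by_cases hu : u ∈ S
        · left
          cases i
          · exact Or.inl (Or.inl ⟨u, hu, rfl⟩)
          · exact Or.inl (Or.inr ⟨u, hu, rfl⟩)
        · by_cases hv : v ∈ S
          · right
            cases j
            · exact Or.inl (Or.inl ⟨v, hv, rfl⟩)
            · exact Or.inl (Or.inr ⟨v, hv, rfl⟩)
          · have hne := hfne u v hu hv hadj
            by_cases hfu : f u = i
            · exact Or.inl (Or.inr ⟨u, hu, congrArg (Prod.mk u) hfu⟩)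
            · have : f v = j := by
                subst hij
                revert hne hfu; cases f u <;> cases f v <;> cases i <;> simp
              exact Or.inr (Or.inr ⟨v, hv, congrArg (Prod.mk v) this⟩)
      · dsimp only at huv hij
        subst huv
        by_cases hu : u ∈ S
        · left
          cases i
          · exact Or.inl (Or.inl ⟨u, hu, rfl⟩)
          · exact Or.inl (Or.inr ⟨u, hu, rfl⟩)
        · by_cases hfu : f u = i
          · exact Or.inl (Or.inr ⟨u, hu, congrArg (Prod.mk u) hfu⟩)
          · have : f u = j := by revert hij hfu; cases f u <;> cases i <;> cases j <;> simp
            exact Or.inr (Or.inr ⟨u, hu, congrArg (Prod.mk u) this⟩)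
    · have h1 : ((fun v => (v, false)) '' S).ncard ≤ S.ncard := Set.ncard_image_le
      have h2 : ((fun v => (v, true)) '' S).ncard ≤ S.ncard := Set.ncard_image_le
      have h3 : ((fun v => (v, f v)) '' (Sᶜ : Set V)).ncard ≤ (Sᶜ : Set V).ncard :=
        Set.ncard_image_le
      have hcompl : S.ncard + (Sᶜ : Set V).ncard = Fintype.card V := by
        rw [Set.ncard_add_ncard_compl, Nat.card_eq_fintype_card]
      calc _ ≤ (((fun v => (v, false)) '' S) ∪ ((fun v => (v, true)) '' S)).ncard +
            ((fun v => (v, f v)) '' (Sᶜ : Set V)).ncard := Set.ncard_union_le _ _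
        _ ≤ (((fun v => (v, false)) '' S).ncard + ((fun v => (v, true)) '' S).ncard) +
            ((fun v => (v, f v)) '' (Sᶜ : Set V)).ncard := by
            exact Nat.add_le_add_right (Set.ncard_union_le _ _) _
        _ ≤ Fintype.card V + k := by omega
  · rintro ⟨X, hX, hcard⟩
    have hc : ∀ v : V, ∃ b, (v, b) ∈ X := by
      intro v
      rcases hX (show (doubledGraph G).Adj (v, false) (v, true) from Or.inr ⟨rfl, by simp⟩)
        with h | h
      exacts [⟨false, h⟩, ⟨true, h⟩]
    choose c hcmem using hc
    set S : Set V := {v | (v, false) ∈ X ∧ (v, true) ∈ X} with hS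
    have hScard : Fintype.card V + S.ncard ≤ X.ncard := by
      have hA : ((fun v => (v, c v)) '' Set.univ).ncard = Fintype.card V := by
        rw [Set.ncard_image_of_injective _ (fun a b h => congrArg Prod.fst h),
          Set.ncard_univ, Nat.card_eq_fintype_card]
      have hB : ((fun v => (v, !c v)) '' S).ncard = S.ncard :=
        Set.ncard_image_of_injective _ (fun a b h => congrArg Prod.fst h)
      have hdisj : Disjoint ((fun v => (v, c v)) '' Set.univ) ((fun v => (v, !c v)) '' S) := by
        rw [Set.disjoint_left]
        rintro _ ⟨a, -, rfl⟩ ⟨b, hb, heq⟩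
        obtain ⟨rfl, h2⟩ := Prod.ext_iff.mp heq
        simp at h2
      have hsub : ((fun v => (v, c v)) '' Set.univ) ∪ ((fun v => (v, !c v)) '' S) ⊆ X := by
        rintro _ (⟨a, -, rfl⟩ | ⟨a, ha, rfl⟩)
        · exact hcmem a
        · cases hca : c a
          · simpa [hca] using ha.2
          · simpa [hca] using ha.1
      calc Fintype.card V + S.ncard
          = (((fun v => (v, c v)) '' Set.univ) ∪ ((fun v => (v, !c v)) '' S)).ncard := by
            rw [Set.ncard_union_eq hdisj, hA, hB]
        _ ≤ X.ncard := Set.ncard_le_ncard hsub (Set.toFinite X)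
    refine ⟨S, ?_, by omega⟩
    have hcol : ∀ (u v : V) (hu : u ∈ (Sᶜ : Set V)) (hv : v ∈ (Sᶜ : Set V)),
        G.Adj u v → c u ≠ c v := by
      intro u v hu hv hadj heq
      have hedge : (doubledGraph G).Adj (u, !c u) (v, !c u) := Or.inl ⟨rfl, hadj⟩
      rcases hX hedge with h | h
      · apply hu
        have h0 := hcmem u
        cases hcu : c u
        · rw [hcu] at h h0; exact ⟨h0, by simpa using h⟩
        · rw [hcu] at h h0; exact ⟨by simpa using h, h0⟩
      · apply hv
        have h0 := hcmem v
        rw [← heq] at h0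
        cases hcu : c u
        · rw [hcu] at h h0; exact ⟨h0, by simpa using h⟩
        · rw [hcu] at h h0; exact ⟨by simpa using h, h0⟩
    have C : (G.induce (Sᶜ : Set V)).Coloring (Fin 2) :=
      SimpleGraph.Coloring.mk (fun v => if c v.1 then 1 else 0) (by
        rintro ⟨u, hu⟩ ⟨v, hv⟩ hadj heq
        have hne := hcol u v hu hv hadj
        dsimp only at heq
        cases hc1 : c u <;> cases hc2 : c v <;> rw [hc1] at hne heq <;> rw [hc2] at hne heq <;>
          first | exact hne rfl | exact absurd heq (by decide))
    exact ⟨C⟩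
end

section
/- Let S be an odd cycle transversal of a finite simple graph G and let (P,Q) be a bipartition of the induced subgraph of G on V \ S. Then P₁ ∪ Q₂ and P₂ ∪ Q₁ are independent sets in G²; equivalently, V(G²) \ (P₁ ∪ Q₂) and V(G²) \ (P₂ ∪ Q₁) are vertex covers of G². (First part of Corollary 1.) -/
/-- `I` is an independent set of `G`: no two of its vertices are adjacent. -/
def IsIndepSet {α : Type*} (G : SimpleGraph α) (I : Set α) : Prop :=
  ∀ ⦃u : α⦄, u ∈ I → ∀ ⦃v : α⦄, v ∈ I → ¬ G.Adj u v

/-- For `S ⊆ V`, the copy `S_i = {(v,i) : v ∈ S}` inside `V × Bool`. -/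
def side {V : Type*} (S : Set V) (b : Bool) : Set (V × Bool) :=
  {x | x.1 ∈ S ∧ x.2 = b}

/-- First part of Corollary 1: if `S` is an OCT of `G` and `(P,Q)` is a bipartition of the
induced subgraph of `G` on `V \ S`, then `P₁ ∪ Q₂` and `P₂ ∪ Q₁` are independent sets in `G²`;
equivalently their complements are vertex covers of `G²`. -/
theorem stmt3 {V : Type*} (G : SimpleGraph V) (S P Q : Set V)
    (hOCT : (G.induce (Sᶜ : Set V)).Colorable 2)
    (hdisj : Disjoint P Q) (hunion : P ∪ Q = Sᶜ)
    (hbip : ∀ ⦃u v : V⦄, G.Adj u v → u ∈ Sᶜ → v ∈ Sᶜ →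
      (u ∈ P ∧ v ∈ Q) ∨ (u ∈ Q ∧ v ∈ P)) :
    IsIndepSet (doubledGraph G) (side P false ∪ side Q true) ∧
    IsIndepSet (doubledGraph G) (side P true ∪ side Q false) ∧
    IsVertexCover (doubledGraph G) ((side P false ∪ side Q true)ᶜ) ∧
    IsVertexCover (doubledGraph G) ((side P true ∪ side Q false)ᶜ) := by
  have hPS : P ⊆ Sᶜ := hunion ▸ Set.subset_union_left
  have hQS : Q ⊆ Sᶜ := hunion ▸ Set.subset_union_right
  have key : ∀ b : Bool, IsIndepSet (doubledGraph G) (side P b ∪ side Q (!b)) := by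
    intro b
    rintro ⟨u, i⟩ hu ⟨v, j⟩ hv (⟨hij, hadj⟩ | ⟨huv, hij⟩)
    · -- same side, G-adjacent
      rcases hu with ⟨hP, hi⟩ | ⟨hQ, hi⟩ <;> rcases hv with ⟨hP', hj⟩ | ⟨hQ', hj⟩
      · rcases hbip hadj (hPS hP) (hPS hP') with ⟨_, h⟩ | ⟨h, _⟩
        · exact hdisj.ne_of_mem hP' h rfl
        · exact hdisj.ne_of_mem hP h rfl
      · simp_all
      · simp_all
      · rcases hbip hadj (hQS hQ) (hQS hQ') with ⟨h, _⟩ | ⟨_, h⟩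
        · exact hdisj.ne_of_mem h hQ rfl
        · exact hdisj.ne_of_mem h hQ' rfl
    · -- same vertex, different side
      rcases hu with ⟨hP, hi⟩ | ⟨hQ, hi⟩ <;> rcases hv with ⟨hP', hj⟩ | ⟨hQ', hj⟩
      · exact hij (hi.trans hj.symm)
      · exact hdisj.ne_of_mem hP (huv ▸ hQ') rfl
      · exact hdisj.ne_of_mem (huv ▸ hP') hQ rfl
      · exact hij (hi.trans hj.symm)
  have cover : ∀ I : Set (V × Bool), IsIndepSet (doubledGraph G) I →
      IsVertexCover (doubledGraph G) Iᶜ := by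
    intro I hI u v hadj
    by_contra h
    push_neg at h
    simp only [Set.notMem_compl_iff] at h
    exact hI h.1 h.2 hadj
  refine ⟨key false, key true, cover _ (key false), cover _ (key true)⟩
end

section
/- Let I be an independent set in G², where G is a finite simple graph with vertex set V. Define P = {v ∈ V : (v,1) ∈ I}, Q = {v ∈ V : (v,2) ∈ I}, and S = {v ∈ V : (v,1) ∉ I and (v,2) ∉ I}. Then S is an odd cycle transversal of G and (P,Q) is a bipartition of the induced subgraph of G on V \ S. (Second part of Corollary 1.) -/
/-- Second part of Corollary 1: if `I` is an independent set in `G²`, then with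
`P = {v | (v,1) ∈ I}`, `Q = {v | (v,2) ∈ I}` and `S = {v | (v,1) ∉ I ∧ (v,2) ∉ I}`,
the set `S` is an OCT of `G` and `(P,Q)` is a bipartition of `G` induced on `V \ S`. -/
theorem stmt4 {V : Type*} (G : SimpleGraph V) (I : Set (V × Bool))
    (hI : IsIndepSet (doubledGraph G) I) :
    (G.induce (({v : V | (v, false) ∉ I ∧ (v, true) ∉ I}ᶜ : Set V))).Colorable 2 ∧
    Disjoint {v : V | (v, false) ∈ I} {v : V | (v, true) ∈ I} ∧
    {v : V | (v, false) ∈ I} ∪ {v : V | (v, true) ∈ I}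
      = ({v : V | (v, false) ∉ I ∧ (v, true) ∉ I}ᶜ : Set V) ∧
    ∀ ⦃u v : V⦄, G.Adj u v →
      u ∈ ({w : V | (w, false) ∉ I ∧ (w, true) ∉ I}ᶜ : Set V) →
      v ∈ ({w : V | (w, false) ∉ I ∧ (w, true) ∉ I}ᶜ : Set V) →
      (u ∈ {w : V | (w, false) ∈ I} ∧ v ∈ {w : V | (w, true) ∈ I}) ∨
      (u ∈ {w : V | (w, true) ∈ I} ∧ v ∈ {w : V | (w, false) ∈ I}) := by
  classical
  have key : ∀ ⦃u v : V⦄, G.Adj u v →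
      ((u, false) ∉ I ∨ (v, false) ∉ I) ∧ ((u, true) ∉ I ∨ (v, true) ∉ I) := by
    intro u v huv
    constructor
    · by_contra h
      push_neg at h
      exact hI h.1 h.2 (Or.inl ⟨rfl, huv⟩)
    · by_contra h
      push_neg at h
      exact hI h.1 h.2 (Or.inl ⟨rfl, huv⟩)
  have hdisj : Disjoint {v : V | (v, false) ∈ I} {v : V | (v, true) ∈ I} := by
    rw [Set.disjoint_left]
    intro v h1 h2
    exact hI h1 h2 (Or.inr ⟨rfl, by simp⟩)
  have hbip : ∀ ⦃u v : V⦄, G.Adj u v →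
      u ∈ ({w : V | (w, false) ∉ I ∧ (w, true) ∉ I}ᶜ : Set V) →
      v ∈ ({w : V | (w, false) ∉ I ∧ (w, true) ∉ I}ᶜ : Set V) →
      (u ∈ {w : V | (w, false) ∈ I} ∧ v ∈ {w : V | (w, true) ∈ I}) ∨
      (u ∈ {w : V | (w, true) ∈ I} ∧ v ∈ {w : V | (w, false) ∈ I}) := by
    intro u v huv hu hv
    simp only [Set.mem_compl_iff, Set.mem_setOf_eq, not_and, not_not] at hu hv
    obtain ⟨h1, h2⟩ := key huv
    by_cases hu1 : (u, false) ∈ I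
    · left
      refine ⟨hu1, ?_⟩
      rcases h1 with h | h
      · exact absurd hu1 h
      · by_cases hv2 : (v, true) ∈ I
        · exact hv2
        · exact absurd (by tauto) h
    · right
      have hu2 : (u, true) ∈ I := by tauto
      refine ⟨hu2, ?_⟩
      rcases h2 with h | h
      · exact absurd hu2 h
      · tauto
  refine ⟨?_, hdisj, ?_, hbip⟩
  · refine ⟨fun v => if (v.1, true) ∈ I then 0 else 1, ?_⟩
    rintro ⟨u, hu⟩ ⟨v, hv⟩ hadj
    simp only [SimpleGraph.comap_adj, Function.Embedding.coe_subtype] at hadj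
    rcases hbip hadj hu hv with ⟨h1, h2⟩ | ⟨h1, h2⟩ <;>
      simp only [Set.mem_setOf_eq] at h1 h2
    · have hu2 : (u, true) ∉ I := fun h => (Set.disjoint_left.mp hdisj h1) h
      simp [h2, hu2]
    · have hv2 : (v, true) ∉ I := fun h => (Set.disjoint_left.mp hdisj h2) h
      simp [h1, hv2]
  · ext v
    simp only [Set.mem_union, Set.mem_setOf_eq, Set.mem_compl_iff, not_and, not_not]
    tauto
end

section
/- For a finite simple graph G on n vertices, the minimum size of a vertex cover of G² equals n plus the minimum size of an odd cycle transversal of G. -/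
/-- Counting a subset of `V × Bool` by its two slices. -/
lemma slice_ncard {V : Type*} [Fintype V] (X : Set (V × Bool)) :
    X.ncard = {v | (v, false) ∈ X}.ncard + {v | (v, true) ∈ X}.ncard := by
  have hX : X = (fun v => (v, false)) '' {v | (v, false) ∈ X} ∪
      (fun v => (v, true)) '' {v | (v, true) ∈ X} := by
    ext ⟨v, b⟩
    cases b <;> simp
  have hinj : ∀ b : Bool, Function.Injective (fun v : V => (v, b)) :=
    fun b a a' h => congrArg Prod.fst h
  conv_lhs => rw [hX]
  rw [Set.ncard_union_eq ?_ (Set.toFinite _) (Set.toFinite _),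
    Set.ncard_image_of_injective _ (hinj false), Set.ncard_image_of_injective _ (hinj true)]
  rw [Set.disjoint_left]
  rintro ⟨v, b⟩ h1 h2
  obtain ⟨w, -, h⟩ := h1
  obtain ⟨w', -, h'⟩ := h2
  rw [← h'] at h
  exact Bool.false_ne_true (congrArg Prod.snd h)

/-- The minimum size of a vertex cover of `G²` equals `n` plus the minimum size of an odd
cycle transversal of `G`. -/
theorem stmt6 {V : Type*} [Fintype V] (G : SimpleGraph V) :
    sInf {m : ℕ | ∃ X : Set (V × Bool), IsVertexCover (doubledGraph G) X ∧ X.ncard = m}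
      = Fintype.card V +
        sInf {m : ℕ | ∃ S : Set V, (G.induce (Sᶜ : Set V)).Colorable 2 ∧ S.ncard = m} := by
  classical
  set A := {m : ℕ | ∃ X : Set (V × Bool), IsVertexCover (doubledGraph G) X ∧ X.ncard = m}
    with hAdef
  set B := {m : ℕ | ∃ S : Set V, (G.induce (Sᶜ : Set V)).Colorable 2 ∧ S.ncard = m} with hBdef
  have hBne : B.Nonempty := by
    refine ⟨(Set.univ : Set V).ncard, Set.univ, ?_, rfl⟩
    refine ⟨⟨fun x => 0, ?_⟩⟩
    rintro ⟨v, hv⟩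
    simp at hv
  have hAne : A.Nonempty :=
    ⟨(Set.univ : Set (V × Bool)).ncard, Set.univ, fun u v _ => Or.inl trivial, rfl⟩
  apply le_antisymm
  · -- build a cover from a minimum OCT
    obtain ⟨S, ⟨C⟩, hS⟩ := Nat.sInf_mem hBne
    set c : V → Bool := fun v => if h : v ∈ (Sᶜ : Set V) then decide (C ⟨v, h⟩ = 1) else false
      with hc
    set X : Set (V × Bool) := {p | p.1 ∈ S ∨ c p.1 = p.2} with hXdef
    have hproper : ∀ u v, u ∉ S → v ∉ S → G.Adj u v → c u ≠ c v := by
      intro u v hu hv hadj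
      have hu' : u ∈ (Sᶜ : Set V) := hu
      have hv' : v ∈ (Sᶜ : Set V) := hv
      have hCC : C ⟨u, hu'⟩ ≠ C ⟨v, hv'⟩ := by
        apply C.valid
        exact hadj
      have key : ∀ a b : Fin 2, a ≠ b → decide (a = 1) ≠ decide (b = 1) := by decide
      simp only [hc, dif_pos hu', dif_pos hv']
      exact key _ _ hCC
    have hcov : IsVertexCover (doubledGraph G) X := by
      rintro ⟨u, i⟩ ⟨v, j⟩ (⟨hij, huv⟩ | ⟨heq, hne⟩)
      · by_cases hu : u ∈ S
        · exact Or.inl (Or.inl hu)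
        by_cases hv : v ∈ S
        · exact Or.inr (Or.inl hv)
        have hne := hproper u v hu hv huv
        simp only [ne_eq] at hij ⊢
        by_cases hcu : c u = i
        · exact Or.inl (Or.inr hcu)
        · refine Or.inr (Or.inr ?_)
          subst hij
          revert hne hcu
          cases c u <;> cases c v <;> cases i <;> simp
      · by_cases hu : u ∈ S
        · exact Or.inl (Or.inl hu)
        by_cases hcu : c u = i
        · exact Or.inl (Or.inr hcu)
        · refine Or.inr (Or.inr ?_)
          subst heq
          revert hne hcu
          cases c u <;> cases i <;> cases j <;> simp
    have hcard : X.ncard = Fintype.card V + S.ncard := by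
      have h1 : {v | (v, false) ∈ X} = {v | v ∈ S ∨ c v = false} := rfl
      have h2 : {v | (v, true) ∈ X} = {v | v ∈ S ∨ c v = true} := rfl
      have hunion : {v | v ∈ S ∨ c v = false} ∪ {v | v ∈ S ∨ c v = true} = Set.univ := by
        ext v; simp only [Set.mem_union, Set.mem_setOf_eq, Set.mem_univ, iff_true]
        cases h : c v
        · exact Or.inl (Or.inr rfl)
        · exact Or.inr (Or.inr rfl)
      have hinter : {v | v ∈ S ∨ c v = false} ∩ {v | v ∈ S ∨ c v = true} = S := by
        ext v
        simp only [Set.mem_inter_iff, Set.mem_setOf_eq]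
        constructor
        · rintro ⟨hf | hf, ht | ht⟩ <;> first | assumption | (rw [hf] at ht; exact absurd ht (by simp))
        · exact fun h => ⟨Or.inl h, Or.inl h⟩
      rw [slice_ncard, h1, h2,
        ← Set.ncard_union_add_ncard_inter _ _ (Set.toFinite _) (Set.toFinite _),
        hunion, hinter, Set.ncard_univ, Nat.card_eq_fintype_card]
    exact Nat.sInf_le ⟨X, hcov, by rw [hcard, hS]⟩
  · -- extract an OCT from a minimum cover
    obtain ⟨X, hcov, hX⟩ := Nat.sInf_mem hAne
    set Af : Set V := {v | (v, false) ∈ X} with hAf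
    set Bf : Set V := {v | (v, true) ∈ X} with hBf
    have hunion : Af ∪ Bf = Set.univ := by
      ext v
      simp only [Set.mem_union, hAf, hBf, Set.mem_setOf_eq, Set.mem_univ, iff_true]
      exact hcov (Or.inr ⟨rfl, by simp⟩)
    set S : Set V := Af ∩ Bf with hSdef
    have hcol : (G.induce (Sᶜ : Set V)).Colorable 2 := by
      have hcardBool : Fintype.card Bool = 2 := rfl
      rw [← hcardBool]
      refine SimpleGraph.Coloring.colorable ⟨fun x => decide ((x.1, true) ∈ X), ?_⟩
      rintro ⟨u, hu⟩ ⟨v, hv⟩ hadj heqc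
      have huS : ¬((u, false) ∈ X ∧ (u, true) ∈ X) := hu
      have hvS : ¬((v, false) ∈ X ∧ (v, true) ∈ X) := hv
      have hadj' : G.Adj u v := hadj
      have heq' : ((u, true) ∈ X) ↔ ((v, true) ∈ X) := by
        simpa using decide_eq_decide.mp heqc
      by_cases hut : (u, true) ∈ X
      · have hvt : (v, true) ∈ X := heq'.mp hut
        have huf : (u, false) ∉ X := fun h => huS ⟨h, hut⟩
        have hvf : (v, false) ∉ X := fun h => hvS ⟨h, hvt⟩
        rcases hcov (Or.inl ⟨rfl, hadj'⟩ :
            (doubledGraph G).Adj (u, false) (v, false)) with h | h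
        · exact huf h
        · exact hvf h
      · have hvt : (v, true) ∉ X := fun h => hut (heq'.mpr h)
        rcases hcov (Or.inl ⟨rfl, hadj'⟩ :
            (doubledGraph G).Adj (u, true) (v, true)) with h | h
        · exact hut h
        · exact hvt h
    have hle : sInf B ≤ S.ncard := Nat.sInf_le ⟨S, hcol, rfl⟩
    have hcount : X.ncard = Fintype.card V + S.ncard := by
      rw [slice_ncard, ← hAf, ← hBf,
        ← Set.ncard_union_add_ncard_inter _ _ (Set.toFinite _) (Set.toFinite _),
        hunion, ← hSdef, Set.ncard_univ, Nat.card_eq_fintype_card]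
    omega
end

section
/- Let H be a finite simple graph on h vertices, T an odd cycle transversal of H, and B = V(H) \ T. If H has an odd cycle transversal T' ⊆ B of size r, then H² has a vertex cover X of size h + r such that for each v ∈ T, exactly one of (v,1), (v,2) belongs to X. (Forward direction of Observation 1.) -/
/-- Forward direction of Observation 1: if `H` (with OCT `T`, `B = V(H) \ T`) has an OCT
`T' ⊆ B` of size `r`, then `H²` has a vertex cover `X` of size `h + r` such that for each
`v ∈ T` exactly one of `(v,1)`, `(v,2)` belongs to `X`. -/
theorem stmt8 {V : Type*} [Fintype V] (H : SimpleGraph V) (T T' : Set V) (r : ℕ)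
    (hT : (H.induce (Tᶜ : Set V)).Colorable 2)
    (hT'B : T' ⊆ (Set.univ \ T : Set V))
    (hT' : (H.induce (T'ᶜ : Set V)).Colorable 2)
    (hr : T'.ncard = r) :
    ∃ X : Set (V × Bool), IsVertexCover (doubledGraph H) X ∧
      X.ncard = Fintype.card V + r ∧
      ∀ v ∈ T, ((v, false) ∈ X ∧ (v, true) ∉ X) ∨
               ((v, false) ∉ X ∧ (v, true) ∈ X) := by
  classical
  obtain ⟨C⟩ := hT'
  obtain ⟨c, hcol⟩ : ∃ c : V → Bool, ∀ u v, u ∉ T' → v ∉ T' → H.Adj u v → c u ≠ c v := by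
    refine ⟨fun v => if h : v ∈ (T'ᶜ : Set V) then decide (C ⟨v, h⟩ = 1) else false, ?_⟩
    intro u v hu hv hadj
    have hne : C ⟨u, hu⟩ ≠ C ⟨v, hv⟩ := C.valid (by exact hadj)
    intro h
    simp only at h
    rw [dif_pos (show u ∈ (T'ᶜ : Set V) from hu), dif_pos (show v ∈ (T'ᶜ : Set V) from hv),
      decide_eq_decide] at h
    have h1 := (C ⟨u, hu⟩).isLt
    have h2 := (C ⟨v, hv⟩).isLt
    have h' : (C ⟨u, hu⟩).val = 1 ↔ (C ⟨v, hv⟩).val = 1 := by simpa [Fin.ext_iff] using h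
    exact hne (Fin.ext (by omega))
  refine ⟨{p : V × Bool | p.1 ∈ T' ∨ p.2 = c p.1}, ?_, ?_, ?_⟩
  · rintro ⟨u, i⟩ ⟨v, j⟩ (⟨h1, h2⟩ | ⟨h1, h2⟩)
    · simp only [Set.mem_setOf_eq]
      by_cases hu : u ∈ T'
      · exact Or.inl (Or.inl hu)
      by_cases hv : v ∈ T'
      · exact Or.inr (Or.inl hv)
      have hne := hcol u v hu hv h2
      dsimp only at h1 ⊢
      subst h1
      rcases Bool.eq_or_eq_not i (c u) with h | h
      · exact Or.inl (Or.inr h)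
      · refine Or.inr (Or.inr ?_)
        cases hcv : c v <;> cases hcu : c u <;> simp_all
    · simp only [Set.mem_setOf_eq]
      dsimp only at h1 h2
      subst h1
      by_cases hu : u ∈ T'
      · exact Or.inl (Or.inl hu)
      rcases Bool.eq_or_eq_not i (c u) with h | h
      · exact Or.inl (Or.inr h)
      · refine Or.inr (Or.inr ?_)
        cases hj : j <;> cases hi : i <;> simp_all
  · have hinj1 : Function.Injective (fun v : V => (v, c v)) :=
      fun a b h => congrArg Prod.fst h
    have hinj2 : Function.Injective (fun v : V => (v, !c v)) :=
      fun a b h => congrArg Prod.fst h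
    have hXeq : {p : V × Bool | p.1 ∈ T' ∨ p.2 = c p.1}
        = (Set.range fun v => (v, c v)) ∪ ((fun v => (v, !c v)) '' T') := by
      ext ⟨v, b⟩
      simp only [Set.mem_setOf_eq, Set.mem_union, Set.mem_range, Set.mem_image, Prod.mk.injEq]
      constructor
      · rintro (hv | hb)
        · rcases Bool.eq_or_eq_not b (c v) with h | h
          · exact Or.inl ⟨v, rfl, h.symm⟩
          · exact Or.inr ⟨v, hv, rfl, h.symm⟩
        · exact Or.inl ⟨v, rfl, hb.symm⟩
      · rintro (⟨u, rfl, rfl⟩ | ⟨u, hu, rfl, rfl⟩)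
        · exact Or.inr rfl
        · exact Or.inl hu
    rw [hXeq, Set.ncard_union_eq, ← hr]
    · congr 1
      · rw [← Set.image_univ, Set.ncard_image_of_injective _ hinj1, Set.ncard_univ,
          Nat.card_eq_fintype_card]
      · exact Set.ncard_image_of_injective _ hinj2
    · rw [Set.disjoint_left]
      rintro p ⟨u, rfl⟩ ⟨w, hw, heq⟩
      simp only [Prod.mk.injEq] at heq
      obtain ⟨rfl, h2⟩ := heq
      cases h : c w <;> simp_all
  · intro v hv
    have hvT' : v ∉ T' := fun h => (hT'B h).2 hv
    simp only [Set.mem_setOf_eq, hvT', false_or]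
    cases h : c v
    · exact Or.inl ⟨rfl, by simp [h]⟩
    · exact Or.inr ⟨by simp [h], rfl⟩
end

section
/- Let G be a finite simple graph, A ⊆ V(G), and let Y ⊆ A be a vertex cover of the induced subgraph G[A]. Let W = {u ∈ V(G) \ A : u is adjacent in G to some vertex of A \ Y}, and let Z be a minimum vertex cover of the induced subgraph G[(V(G) \ A) \ W]. Then for every vertex cover X of G with X ∩ A = Y, we have |Y ∪ W ∪ Z| ≤ |X|; that is, Y ∪ W ∪ Z is a minimum vertex cover of G among all vertex covers whose intersection with A equals Y. (Optimality of step 2 of the disjoint compression algorithm.) -/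
/-- `X` is a vertex cover of the induced subgraph `G[A]`: it contains an endpoint of
every edge of `G` with both endpoints in `A`. -/
def IsVertexCoverOn {α : Type*} (G : SimpleGraph α) (A X : Set α) : Prop :=
  ∀ ⦃u v : α⦄, G.Adj u v → u ∈ A → v ∈ A → u ∈ X ∨ v ∈ X

/-- Optimality of step 2 of the disjoint compression algorithm: with `Y`, `W` as before and
`Z` a *minimum* vertex cover of `G[(V(G) \ A) \ W]`, every vertex cover `X` of `G` with
`X ∩ A = Y` satisfies `|Y ∪ W ∪ Z| ≤ |X|`. -/
theorem stmt12 {V : Type*} [Fintype V] (G : SimpleGraph V) (A Y W Z : Set V)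
    (hYA : Y ⊆ A) (hY : IsVertexCoverOn G A Y)
    (hW : W = {u : V | u ∈ Aᶜ ∧ ∃ w ∈ A \ Y, G.Adj u w})
    (hZsub : Z ⊆ Aᶜ \ W) (hZ : IsVertexCoverOn G (Aᶜ \ W) Z)
    (hZmin : ∀ Z' : Set V, Z' ⊆ Aᶜ \ W → IsVertexCoverOn G (Aᶜ \ W) Z' →
      Z.ncard ≤ Z'.ncard) :
    ∀ X : Set V, IsVertexCover G X → X ∩ A = Y →
      (Y ∪ W ∪ Z).ncard ≤ X.ncard := by
  intro X hX hXA
  set Z' := (X \ A) \ W with hZ'def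
  have hZ'sub : Z' ⊆ Aᶜ \ W := fun u hu => ⟨hu.1.2, hu.2⟩
  have hZ'cover : IsVertexCoverOn G (Aᶜ \ W) Z' := by
    intro u v hadj hu hv
    rcases hX hadj with h | h
    · exact Or.inl ⟨⟨h, hu.1⟩, hu.2⟩
    · exact Or.inr ⟨⟨h, hv.1⟩, hv.2⟩
  have hZle : Z.ncard ≤ Z'.ncard := hZmin Z' hZ'sub hZ'cover
  have hWX : W ⊆ X \ A := by
    intro u hu
    rw [hW] at hu
    obtain ⟨huA, w, hwAY, hadj⟩ := hu
    rcases hX hadj with h | h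
    · exact ⟨h, huA⟩
    · exact absurd (hXA ▸ Set.mem_inter h hwAY.1) hwAY.2
  have hWA : W ⊆ Aᶜ := fun u hu => (hWX hu).2
  have hZA : Z ⊆ Aᶜ := fun u hu => (hZsub hu).1
  have hWZdisj : Disjoint W Z := Set.disjoint_left.mpr fun u hu huZ => (hZsub huZ).2 hu
  have hYd : Disjoint Y (W ∪ Z) := Set.disjoint_left.mpr (by
    rintro u hu (h | h)
    · exact hWA h (hYA hu)
    · exact hZA h (hYA hu))
  have hWZ'disj : Disjoint W Z' := Set.disjoint_left.mpr fun u hu huZ => huZ.2 hu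
  rw [Set.union_assoc, Set.ncard_union_eq hYd (Set.toFinite _) (Set.toFinite _),
    Set.ncard_union_eq hWZdisj (Set.toFinite _) (Set.toFinite _)]
  have h1 : W.ncard + Z'.ncard ≤ (X \ A).ncard := by
    rw [← Set.ncard_union_eq hWZ'disj (Set.toFinite _) (Set.toFinite _)]
    exact Set.ncard_le_ncard (Set.union_subset hWX Set.diff_subset) (Set.toFinite _)
  have h2 : (X ∩ A).ncard + (X \ A).ncard = X.ncard := by
    rw [← Set.ncard_union_eq (Set.disjoint_left.mpr fun u hu huD => huD.2 hu.2)
      (Set.toFinite _) (Set.toFinite _), Set.inter_union_diff]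
  calc Y.ncard + (W.ncard + Z.ncard) ≤ (X ∩ A).ncard + (W.ncard + Z'.ncard) := by
        rw [hXA]; omega
    _ ≤ (X ∩ A).ncard + (X \ A).ncard := by omega
    _ = X.ncard := h2
end
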